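/- Let m > 1 be real and j an integer such that j/m is an integer and j + j/m is even. Then z = j/m is a root of multiplicity at least 3 of p(z) = sin(mπz) - m·sin(πz), i.e., p(j/m) = p'(j/m) = p''(j/m) = 0 but p'''(j/m) ≠ 0. -/

import Mathlib

open Complex Real

private lemma hda (a z : ℂ) : HasDerivAt (fun z : ℂ => a * z) a z := by
  simpa using (hasDerivAt_id z).const_mul a

private lemma dstep_sin (A B a b : ℂ) :
    deriv (fun z : ℂ => A * Complex.sin (a * z) + B * Complex.sin (b * z)) =
      fun z => A * a * Complex.cos (a * z) + B * b * Complex.cos (b * z) := by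
  funext z
  have h1 : HasDerivAt (fun z : ℂ => A * Complex.sin (a * z)) (A * a * Complex.cos (a * z)) z := by
    have := ((Complex.hasDerivAt_sin (a * z)).comp z (hda a z)).const_mul A
    rw [show A * a * Complex.cos (a * z) = A * (Complex.cos (a * z) * a) by ring]; exact this
  have h2 : HasDerivAt (fun z : ℂ => B * Complex.sin (b * z)) (B * b * Complex.cos (b * z)) z := by
    have := ((Complex.hasDerivAt_sin (b * z)).comp z (hda b z)).const_mul B
    rw [show B * b * Complex.cos (b * z) = B * (Complex.cos (b * z) * b) by ring]; exact this
  exact (h1.add h2).deriv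

private lemma dstep_cos (A B a b : ℂ) :
    deriv (fun z : ℂ => A * Complex.cos (a * z) + B * Complex.cos (b * z)) =
      fun z => (-(A * a)) * Complex.sin (a * z) + (-(B * b)) * Complex.sin (b * z) := by
  funext z
  have h1 : HasDerivAt (fun z : ℂ => A * Complex.cos (a * z))
      ((-(A * a)) * Complex.sin (a * z)) z := by
    have := ((Complex.hasDerivAt_cos (a * z)).comp z (hda a z)).const_mul A
    rw [show (-(A * a)) * Complex.sin (a * z) = A * (-Complex.sin (a * z) * a) by ring]; exact this
  have h2 : HasDerivAt (fun z : ℂ => B * Complex.cos (b * z))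
      ((-(B * b)) * Complex.sin (b * z)) z := by
    have := ((Complex.hasDerivAt_cos (b * z)).comp z (hda b z)).const_mul B
    rw [show (-(B * b)) * Complex.sin (b * z) = B * (-Complex.sin (b * z) * b) by ring]; exact this
  exact (h1.add h2).deriv

private lemma ccos_int (k : ℤ) : Complex.cos (k * Real.pi) = (-1) ^ k := by
  have h : ((k : ℂ) * (Real.pi : ℂ)) = ((k * Real.pi : ℝ) : ℂ) := by push_cast; ring
  have hr : Real.cos (k * Real.pi) = (-1) ^ k := by
    simpa using Real.cos_add_int_mul_pi 0 k
  rw [h, ← Complex.ofReal_cos, hr]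
  push_cast
  ring

theorem triple_root_even_case (m : ℝ) (hm : 1 < m) (j n : ℤ)
    (hn : (j : ℝ) = n * m) (hpar : Even (j + n)) :
    (fun z : ℂ => Complex.sin (m * Real.pi * z) - m * Complex.sin (Real.pi * z))
        ((j : ℂ) / m) = 0 ∧
    deriv (fun z : ℂ => Complex.sin (m * Real.pi * z) - m * Complex.sin (Real.pi * z))
        ((j : ℂ) / m) = 0 ∧
    iteratedDeriv 2
      (fun z : ℂ => Complex.sin (m * Real.pi * z) - m * Complex.sin (Real.pi * z))
        ((j : ℂ) / m) = 0 ∧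
    iteratedDeriv 3
      (fun z : ℂ => Complex.sin (m * Real.pi * z) - m * Complex.sin (Real.pi * z))
        ((j : ℂ) / m) ≠ 0 := by
  have hm1 : (0 : ℝ) < m := lt_trans one_pos hm
  have hm0 : (m : ℂ) ≠ 0 := by exact_mod_cast ne_of_gt hm1
  have hjc : (j : ℂ) = n * m := by exact_mod_cast hn
  have hz : ((j : ℂ) / m) = (n : ℂ) := by rw [hjc]; field_simp
  set a : ℂ := (m : ℂ) * Real.pi with ha
  set b : ℂ := (Real.pi : ℂ) with hb
  set z₀ : ℂ := (j : ℂ) / m with hz₀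
  have hfa : a * z₀ = (j : ℤ) * Real.pi := by
    rw [hz, ha, hb, hjc]; push_cast; ring
  have hfb : b * z₀ = (n : ℤ) * Real.pi := by
    rw [hz, hb]; push_cast; ring
  have hfun : (fun z : ℂ => Complex.sin (m * Real.pi * z) - m * Complex.sin (Real.pi * z)) =
      fun z : ℂ => (1 : ℂ) * Complex.sin (a * z) + (-(m : ℂ)) * Complex.sin (b * z) := by
    funext z; rw [ha, hb]; ring
  -- parity: (-1)^j = (-1)^n
  have hne1 : (-1 : ℂ) ≠ 0 := by norm_num
  have hpow : ((-1 : ℂ)) ^ j = (-1 : ℂ) ^ n := by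
    have h1 : (-1 : ℂ) ^ (j + n) = 1 := Even.neg_one_zpow hpar
    have h2 : (-1 : ℂ) ^ n * (-1 : ℂ) ^ n = 1 := by
      rw [← zpow_add₀ hne1]; exact Even.neg_one_zpow ⟨n, rfl⟩
    calc (-1 : ℂ) ^ j = (-1 : ℂ) ^ j * ((-1 : ℂ) ^ n * (-1 : ℂ) ^ n) := by rw [h2, mul_one]
      _ = ((-1 : ℂ) ^ (j + n)) * (-1 : ℂ) ^ n := by rw [zpow_add₀ hne1]; ring
      _ = (-1 : ℂ) ^ n := by rw [h1, one_mul]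
  have hcos_eq : Complex.cos ((j : ℤ) * Real.pi) = Complex.cos ((n : ℤ) * Real.pi) := by
    rw [ccos_int, ccos_int, hpow]
  -- derivatives
  have d1 : deriv (fun z : ℂ => Complex.sin (m * Real.pi * z) - m * Complex.sin (Real.pi * z)) =
      fun z => (1 : ℂ) * a * Complex.cos (a * z) + (-(m : ℂ)) * b * Complex.cos (b * z) := by
    rw [hfun]; exact dstep_sin _ _ _ _
  have d2 : iteratedDeriv 2
      (fun z : ℂ => Complex.sin (m * Real.pi * z) - m * Complex.sin (Real.pi * z)) =
      fun z => (-((1 : ℂ) * a * a)) * Complex.sin (a * z) +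
        (-((-(m : ℂ)) * b * b)) * Complex.sin (b * z) := by
    rw [show (2 : ℕ) = 1 + 1 from rfl, iteratedDeriv_succ, iteratedDeriv_one, d1]
    exact dstep_cos _ _ _ _
  have d3 : iteratedDeriv 3
      (fun z : ℂ => Complex.sin (m * Real.pi * z) - m * Complex.sin (Real.pi * z)) =
      fun z => (-((1 : ℂ) * a * a)) * a * Complex.cos (a * z) +
        (-((-(m : ℂ)) * b * b)) * b * Complex.cos (b * z) := by
    rw [show (3 : ℕ) = 2 + 1 from rfl, iteratedDeriv_succ, d2]
    exact dstep_sin _ _ _ _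
  refine ⟨?_, ?_, ?_, ?_⟩
  · show Complex.sin (a * z₀) - (m : ℂ) * Complex.sin (b * z₀) = 0
    rw [hfa, hfb, Complex.sin_int_mul_pi, Complex.sin_int_mul_pi]
    ring
  · rw [d1]
    show (1 : ℂ) * a * Complex.cos (a * z₀) + (-(m : ℂ)) * b * Complex.cos (b * z₀) = 0
    rw [hfa, hfb, hcos_eq, ha, hb]
    ring
  · rw [d2]
    show (-((1 : ℂ) * a * a)) * Complex.sin (a * z₀) +
        (-((-(m : ℂ)) * b * b)) * Complex.sin (b * z₀) = 0
    rw [hfa, hfb, Complex.sin_int_mul_pi, Complex.sin_int_mul_pi]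
    ring
  · rw [d3]
    show (-((1 : ℂ) * a * a)) * a * Complex.cos (a * z₀) +
        (-((-(m : ℂ)) * b * b)) * b * Complex.cos (b * z₀) ≠ 0
    rw [hfa, hfb, hcos_eq, ccos_int]
    have hval : (-((1 : ℂ) * a * a)) * a * ((-1) ^ n) +
        (-((-(m : ℂ)) * b * b)) * b * ((-1) ^ n) =
        (Real.pi : ℂ) ^ 3 * m * (1 - (m : ℂ) ^ 2) * (-1) ^ n := by
      rw [ha, hb]; ring
    rw [hval]
    have hpi : (Real.pi : ℂ) ≠ 0 := Complex.ofReal_ne_zero.mpr Real.pi_ne_zero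
    have hm2 : (1 : ℂ) - (m : ℂ) ^ 2 ≠ 0 := by
      have : (1 : ℝ) - m ^ 2 ≠ 0 := by nlinarith
      exact_mod_cast this
    exact mul_ne_zero (mul_ne_zero (mul_ne_zero (pow_ne_zero 3 hpi) hm0) hm2)
      (zpow_ne_zero n hne1)
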